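/- For every p ∈ ℝ⁵, let τ = sin(p₁+p₃), let G(p) be the 5×5 matrix with rows (1+τ², 0, τ², 0, −τ), (0, 1, 0, 0, 0), (τ², 0, 1+τ², 0, −τ), (0, 0, 0, 1, 0), (−τ, 0, −τ, 0, 1), and let φ(p) be the 5×5 matrix with rows (0, −1, 0, 0, 0), (1, 0, 0, 0, 0), (0, 0, 0, −1, 0), (0, 0, 1, 0, 0), (0, −τ, 0, −τ, 0). Then for all X, Y ∈ ℝ⁵ the fundamental two-form satisfies (φ(p)X)ᵀ · G(p) · Y = X₁Y₂ − X₂Y₁ + X₃Y₄ − X₄Y₃; that is, the fundamental two-form of the structure of Example 2 is the constant form dx₁∧dx₂ + dx₃∧dx₄ (in particular all dependence on τ cancels, so the form is closed). -/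

import Mathlib

open Matrix

noncomputable section

/-- `τ = sin(p₁ + p₃)`. -/
def tau9 (p : Fin 5 → ℝ) : ℝ := Real.sin (p 0 + p 2)

/-- The metric matrix `G(p)` of Example 2. -/
def G9 (p : Fin 5 → ℝ) : Matrix (Fin 5) (Fin 5) ℝ :=
  !![1 + tau9 p ^ 2, 0, tau9 p ^ 2, 0, -tau9 p;
     0, 1, 0, 0, 0;
     tau9 p ^ 2, 0, 1 + tau9 p ^ 2, 0, -tau9 p;
     0, 0, 0, 1, 0;
     -tau9 p, 0, -tau9 p, 0, 1]

/-- The matrix `φ(p)` of Example 2. -/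
def phi9 (p : Fin 5 → ℝ) : Matrix (Fin 5) (Fin 5) ℝ :=
  !![0, -1, 0, 0, 0;
     1, 0, 0, 0, 0;
     0, 0, 0, -1, 0;
     0, 0, 1, 0, 0;
     0, -tau9 p, 0, -tau9 p, 0]

/-- Example 2: the fundamental two-form
`Φ(X,Y) = g(φX, Y) = (φ(p)X)ᵀ G(p) Y` equals the constant form `dx₁∧dx₂ + dx₃∧dx₄`;
in particular all dependence on `τ` cancels, so the form is closed. -/
theorem example2_fundamental_two_form (p : Fin 5 → ℝ) (X Y : Fin 5 → ℝ) :
    dotProduct ((phi9 p).mulVec X) ((G9 p).mulVec Y) =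
      X 0 * Y 1 - X 1 * Y 0 + X 2 * Y 3 - X 3 * Y 2 := by
  simp [G9, phi9, dotProduct, Matrix.mulVec, Fin.sum_univ_five, Matrix.vecHead, Matrix.vecTail]
  ring

end
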